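/- Let α be a nonempty finite type and let μ be a probability distribution on α × Bool × Bool with coordinate random variables A, X, Y. Assume (i) P(A=a) > 0 for every a ∈ α, (ii) A and Y are conditionally independent given X, (iii) X and Y are not independent, and (iv) P(Y=1|X=0) = 0. Then P(Y=1) ≤ P(X=1) ≤ P(Y=1) / (max_a P(Y=1|A=a)), and max_a P(Y=1|A=a) > 0. (Corollary 1: refinement under the unidirectional-error assumption (A1).) -/

import Mathlib

open Classical in
/-- Probability of an event `E` under a finitely supported distribution `μ`. -/
noncomputable def pr {Ω : Type*} [Fintype Ω] (μ : Ω → ℝ) (E : Ω → Prop) : ℝ :=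
  ∑ ω, if E ω then μ ω else 0

/-- Conditional probability `P(E | F) = P(E ∧ F) / P(F)`. -/
noncomputable def cpr {Ω : Type*} [Fintype Ω] (μ : Ω → ℝ) (E F : Ω → Prop) : ℝ :=
  pr μ (fun ω => E ω ∧ F ω) / pr μ F

section helpers
open Classical
variable {Ω : Type*} [Fintype Ω] (μ : Ω → ℝ)

lemma pr_nonneg (hnn : ∀ ω, 0 ≤ μ ω) (E : Ω → Prop) : 0 ≤ pr μ E := by
  apply Finset.sum_nonneg; intro ω _; split <;> simp [hnn ω]

lemma pr_congr {E F : Ω → Prop} (h : ∀ ω, E ω ↔ F ω) : pr μ E = pr μ F := by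
  unfold pr; apply Finset.sum_congr rfl; intro ω _; simp [h ω]

lemma pr_mono (hnn : ∀ ω, 0 ≤ μ ω) {E F : Ω → Prop} (h : ∀ ω, E ω → F ω) :
    pr μ E ≤ pr μ F := by
  apply Finset.sum_le_sum; intro ω _
  by_cases hE : E ω
  · simp [hE, h ω hE]
  · simp only [hE, if_neg, if_false]
    split <;> simp [hnn ω]

lemma le_pr (hnn : ∀ ω, 0 ≤ μ ω) {E : Ω → Prop} {ω : Ω} (h : E ω) : μ ω ≤ pr μ E := by
  unfold pr
  refine le_trans ?_ (Finset.single_le_sum (f := fun i => if E i then μ i else 0)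
    (fun i _ => ?_) (Finset.mem_univ ω))
  · simp [h]
  · show 0 ≤ if E i then μ i else 0
    split <;> simp [hnn i]

lemma pr_split (b : Ω → Bool) (E : Ω → Prop) :
    pr μ E = pr μ (fun ω => E ω ∧ b ω = true) + pr μ (fun ω => E ω ∧ b ω = false) := by
  unfold pr
  rw [← Finset.sum_add_distrib]
  apply Finset.sum_congr rfl; intro ω _
  cases hb : b ω <;> by_cases hE : E ω <;> simp [hE, hb]

lemma pr_true (hsum : ∑ ω, μ ω = 1) : pr μ (fun _ => True) = 1 := by
  unfold pr; simpa using hsum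

end helpers

/-- Corollary 1: refinement under the unidirectional-error assumption (A1). -/
theorem stmt2 {α : Type*} [Fintype α] [Nonempty α]
    (μ : α × Bool × Bool → ℝ)
    (hnn : ∀ ω, 0 ≤ μ ω) (hsum : ∑ ω, μ ω = 1)
    (hA : ∀ a : α, 0 < pr μ (fun ω => ω.1 = a))
    (hCI : ∀ (a : α) (y x : Bool), 0 < pr μ (fun ω => ω.2.1 = x) →
      cpr μ (fun ω => ω.1 = a ∧ ω.2.2 = y) (fun ω => ω.2.1 = x) =
        cpr μ (fun ω => ω.1 = a) (fun ω => ω.2.1 = x) *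
          cpr μ (fun ω => ω.2.2 = y) (fun ω => ω.2.1 = x))
    (hdep : ¬ ∀ x y : Bool,
      pr μ (fun ω => ω.2.1 = x ∧ ω.2.2 = y) =
        pr μ (fun ω => ω.2.1 = x) * pr μ (fun ω => ω.2.2 = y))
    (hA1 : cpr μ (fun ω => ω.2.2 = true) (fun ω => ω.2.1 = false) = 0) :
    pr μ (fun ω => ω.2.2 = true) ≤ pr μ (fun ω => ω.2.1 = true) ∧
    pr μ (fun ω => ω.2.1 = true) ≤
      pr μ (fun ω => ω.2.2 = true) /
        Finset.univ.sup' Finset.univ_nonempty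
          (fun a : α => cpr μ (fun ω => ω.2.2 = true) (fun ω => ω.1 = a)) ∧
    0 < Finset.univ.sup' Finset.univ_nonempty
          (fun a : α => cpr μ (fun ω => ω.2.2 = true) (fun ω => ω.1 = a)) := by
  classical
  have hsplitX : ∀ E : α × Bool × Bool → Prop, pr μ E =
      pr μ (fun ω => E ω ∧ ω.2.1 = true) + pr μ (fun ω => E ω ∧ ω.2.1 = false) :=
    fun E => pr_split μ (fun ω => ω.2.1) E
  have hsplitY : ∀ E : α × Bool × Bool → Prop, pr μ E =
      pr μ (fun ω => E ω ∧ ω.2.2 = true) + pr μ (fun ω => E ω ∧ ω.2.2 = false) :=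
    fun E => pr_split μ (fun ω => ω.2.2) E
  have htotX : pr μ (fun ω : α × Bool × Bool => ω.2.1 = true)
      + pr μ (fun ω : α × Bool × Bool => ω.2.1 = false) = 1 := by
    have h := hsplitX (fun _ => True)
    rw [pr_true μ hsum] at h
    simp only [true_and] at h
    exact h.symm
  have htotY : pr μ (fun ω : α × Bool × Bool => ω.2.2 = true)
      + pr μ (fun ω : α × Bool × Bool => ω.2.2 = false) = 1 := by
    have h := hsplitY (fun _ => True)
    rw [pr_true μ hsum] at h
    simp only [true_and] at h
    exact h.symm
  -- P(X = false) > 0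
  have hX0pos : 0 < pr μ (fun ω : α × Bool × Bool => ω.2.1 = false) := by
    rcases lt_or_eq_of_le (pr_nonneg μ hnn (fun ω : α × Bool × Bool => ω.2.1 = false)) with h | h
    · exact h
    exfalso; apply hdep
    intro x y
    cases x with
    | false =>
        have h1 : pr μ (fun ω : α × Bool × Bool => ω.2.1 = false ∧ ω.2.2 = y) = 0 :=
          le_antisymm (by rw [h]; exact pr_mono μ hnn (fun ω hω => hω.1)) (pr_nonneg μ hnn _)
        rw [h1, ← h]; ring
    | true =>
        have hX1 : pr μ (fun ω : α × Bool × Bool => ω.2.1 = true) = 1 := by linarith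
        have h2 := hsplitX (fun ω => ω.2.2 = y)
        have h3 : pr μ (fun ω : α × Bool × Bool => ω.2.2 = y ∧ ω.2.1 = false) = 0 :=
          le_antisymm (by rw [h]; exact pr_mono μ hnn (fun ω hω => hω.2)) (pr_nonneg μ hnn _)
        have h4 : pr μ (fun ω : α × Bool × Bool => ω.2.1 = true ∧ ω.2.2 = y) =
            pr μ (fun ω : α × Bool × Bool => ω.2.2 = y ∧ ω.2.1 = true) :=
          pr_congr μ (fun ω => and_comm)
        rw [h4, hX1, one_mul]
        linarith
  -- P(X = true) > 0
  have hX1pos : 0 < pr μ (fun ω : α × Bool × Bool => ω.2.1 = true) := by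
    rcases lt_or_eq_of_le (pr_nonneg μ hnn (fun ω : α × Bool × Bool => ω.2.1 = true)) with h | h
    · exact h
    exfalso; apply hdep
    intro x y
    cases x with
    | true =>
        have h1 : pr μ (fun ω : α × Bool × Bool => ω.2.1 = true ∧ ω.2.2 = y) = 0 :=
          le_antisymm (by rw [h]; exact pr_mono μ hnn (fun ω hω => hω.1)) (pr_nonneg μ hnn _)
        rw [h1, ← h]; ring
    | false =>
        have hX0 : pr μ (fun ω : α × Bool × Bool => ω.2.1 = false) = 1 := by linarith
        have h2 := hsplitX (fun ω => ω.2.2 = y)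
        have h3 : pr μ (fun ω : α × Bool × Bool => ω.2.2 = y ∧ ω.2.1 = true) = 0 :=
          le_antisymm (by rw [h]; exact pr_mono μ hnn (fun ω hω => hω.2)) (pr_nonneg μ hnn _)
        have h4 : pr μ (fun ω : α × Bool × Bool => ω.2.1 = false ∧ ω.2.2 = y) =
            pr μ (fun ω : α × Bool × Bool => ω.2.2 = y ∧ ω.2.1 = false) :=
          pr_congr μ (fun ω => and_comm)
        rw [h4, hX0, one_mul]
        linarith
  -- P(Y = true) > 0
  have hY1pos : 0 < pr μ (fun ω : α × Bool × Bool => ω.2.2 = true) := by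
    rcases lt_or_eq_of_le (pr_nonneg μ hnn (fun ω : α × Bool × Bool => ω.2.2 = true)) with h | h
    · exact h
    exfalso; apply hdep
    intro x y
    cases y with
    | true =>
        have h1 : pr μ (fun ω : α × Bool × Bool => ω.2.1 = x ∧ ω.2.2 = true) = 0 :=
          le_antisymm (by rw [h]; exact pr_mono μ hnn (fun ω hω => hω.2)) (pr_nonneg μ hnn _)
        rw [h1, ← h]; ring
    | false =>
        have hY0 : pr μ (fun ω : α × Bool × Bool => ω.2.2 = false) = 1 := by linarith
        have h2 := hsplitY (fun ω => ω.2.1 = x)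
        have h3 : pr μ (fun ω : α × Bool × Bool => ω.2.1 = x ∧ ω.2.2 = true) = 0 :=
          le_antisymm (by rw [h]; exact pr_mono μ hnn (fun ω hω => hω.2)) (pr_nonneg μ hnn _)
        rw [hY0, mul_one]
        linarith
  -- P(Y=1 ∧ X=0) = 0
  have hYX0 : pr μ (fun ω : α × Bool × Bool => ω.2.2 = true ∧ ω.2.1 = false) = 0 := by
    unfold cpr at hA1
    rcases div_eq_zero_iff.mp hA1 with h | h
    · exact h
    · exact absurd h (ne_of_gt hX0pos)
  -- P(Y=1 ∧ X=1) = P(Y=1)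
  have hYX1 : pr μ (fun ω : α × Bool × Bool => ω.2.2 = true ∧ ω.2.1 = true) =
      pr μ (fun ω : α × Bool × Bool => ω.2.2 = true) := by
    have h := hsplitX (fun ω => ω.2.2 = true)
    rw [hYX0] at h
    linarith
  -- first goal
  have goal1 : pr μ (fun ω : α × Bool × Bool => ω.2.2 = true) ≤
      pr μ (fun ω : α × Bool × Bool => ω.2.1 = true) := by
    rw [← hYX1]
    exact pr_mono μ hnn (fun ω hω => hω.2)
  -- per-a bound
  have hbound : ∀ a : α, cpr μ (fun ω => ω.2.2 = true) (fun ω => ω.1 = a) ≤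
      pr μ (fun ω : α × Bool × Bool => ω.2.2 = true) /
        pr μ (fun ω : α × Bool × Bool => ω.2.1 = true) := by
    intro a
    have hci := hCI a true true hX1pos
    unfold cpr at hci ⊢
    -- numerator identity: P(Y=1 ∧ A=a) = P((A=a ∧ Y=1) ∧ X=1)
    have hnum : pr μ (fun ω : α × Bool × Bool => ω.2.2 = true ∧ ω.1 = a) =
        pr μ (fun ω : α × Bool × Bool => (ω.1 = a ∧ ω.2.2 = true) ∧ ω.2.1 = true) := by
      have h := hsplitX (fun ω : α × Bool × Bool => ω.2.2 = true ∧ ω.1 = a)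
      have h0 : pr μ (fun ω : α × Bool × Bool => (ω.2.2 = true ∧ ω.1 = a) ∧ ω.2.1 = false) = 0 :=
        le_antisymm (by rw [← hYX0]; exact pr_mono μ hnn (fun ω hω => ⟨hω.1.1, hω.2⟩))
          (pr_nonneg μ hnn _)
      have hc : pr μ (fun ω : α × Bool × Bool => (ω.2.2 = true ∧ ω.1 = a) ∧ ω.2.1 = true) =
          pr μ (fun ω : α × Bool × Bool => (ω.1 = a ∧ ω.2.2 = true) ∧ ω.2.1 = true) :=
        pr_congr μ (fun ω => by tauto)
      rw [h, h0, add_zero, hc]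
    rw [hnum]
    have hAX1 : pr μ (fun ω : α × Bool × Bool => ω.1 = a ∧ ω.2.1 = true) ≤
        pr μ (fun ω : α × Bool × Bool => ω.1 = a) :=
      pr_mono μ hnn (fun ω hω => hω.1)
    have hAXnn : 0 ≤ pr μ (fun ω : α × Bool × Bool => ω.1 = a ∧ ω.2.1 = true) :=
      pr_nonneg μ hnn _
    have hX1ne : pr μ (fun ω : α × Bool × Bool => ω.2.1 = true) ≠ 0 := ne_of_gt hX1pos
    have hAne : pr μ (fun ω : α × Bool × Bool => ω.1 = a) ≠ 0 := ne_of_gt (hA a)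
    -- from hci: P((A=a∧Y=1)∧X=1) = P(A=a∧X=1) * P(Y=1∧X=1) / P(X=1)
    have hkey : pr μ (fun ω : α × Bool × Bool => (ω.1 = a ∧ ω.2.2 = true) ∧ ω.2.1 = true) =
        pr μ (fun ω : α × Bool × Bool => ω.1 = a ∧ ω.2.1 = true) *
          pr μ (fun ω : α × Bool × Bool => ω.2.2 = true ∧ ω.2.1 = true) /
            pr μ (fun ω : α × Bool × Bool => ω.2.1 = true) := by
      have h5 : pr μ (fun ω : α × Bool × Bool => (ω.1 = a ∧ ω.2.2 = true) ∧ ω.2.1 = true) *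
          pr μ (fun ω : α × Bool × Bool => ω.2.1 = true) =
            pr μ (fun ω : α × Bool × Bool => ω.1 = a ∧ ω.2.1 = true) *
              pr μ (fun ω : α × Bool × Bool => ω.2.2 = true ∧ ω.2.1 = true) := by
        field_simp at hci
        exact hci
      rw [eq_div_iff hX1ne]
      exact h5
    rw [hkey, hYX1]
    rw [div_le_div_iff₀ (hA a) hX1pos]
    have hYnn : 0 ≤ pr μ (fun ω : α × Bool × Bool => ω.2.2 = true) := le_of_lt hY1pos
    calc pr μ (fun ω : α × Bool × Bool => ω.1 = a ∧ ω.2.1 = true) *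
          pr μ (fun ω : α × Bool × Bool => ω.2.2 = true) /
            pr μ (fun ω : α × Bool × Bool => ω.2.1 = true) *
          pr μ (fun ω : α × Bool × Bool => ω.2.1 = true)
        = pr μ (fun ω : α × Bool × Bool => ω.1 = a ∧ ω.2.1 = true) *
            pr μ (fun ω : α × Bool × Bool => ω.2.2 = true) := by
          field_simp
      _ ≤ pr μ (fun ω : α × Bool × Bool => ω.2.2 = true) *
            pr μ (fun ω : α × Bool × Bool => ω.1 = a) := by
          rw [mul_comm]
          exact mul_le_mul_of_nonneg_left hAX1 hYnn
  -- sup bound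
  set M := Finset.univ.sup' Finset.univ_nonempty
      (fun a : α => cpr μ (fun ω => ω.2.2 = true) (fun ω => ω.1 = a)) with hM
  have hMle : M ≤ pr μ (fun ω : α × Bool × Bool => ω.2.2 = true) /
      pr μ (fun ω : α × Bool × Bool => ω.2.1 = true) :=
    Finset.sup'_le _ _ (fun a _ => hbound a)
  -- M > 0
  have hMpos : 0 < M := by
    obtain ⟨ω0, hω0Y, hω0pos⟩ : ∃ ω : α × Bool × Bool, ω.2.2 = true ∧ 0 < μ ω := by
      by_contra h
      push_neg at h
      have : pr μ (fun ω : α × Bool × Bool => ω.2.2 = true) = 0 := by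
        unfold pr
        apply Finset.sum_eq_zero
        intro ω _
        split
        · exact le_antisymm (h ω ‹_›) (hnn ω)
        · rfl
      linarith
    have hpos : 0 < cpr μ (fun ω => ω.2.2 = true) (fun ω => ω.1 = ω0.1) := by
      unfold cpr
      apply div_pos _ (hA ω0.1)
      calc (0:ℝ) < μ ω0 := hω0pos
        _ ≤ _ := le_pr μ hnn ⟨hω0Y, rfl⟩
    calc (0:ℝ) < _ := hpos
      _ ≤ M := Finset.le_sup' (fun a : α => cpr μ (fun ω => ω.2.2 = true) (fun ω => ω.1 = a))
          (Finset.mem_univ ω0.1)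
  refine ⟨goal1, ?_, hMpos⟩
  rw [le_div_iff₀ hMpos]
  calc pr μ (fun ω : α × Bool × Bool => ω.2.1 = true) * M
      ≤ pr μ (fun ω : α × Bool × Bool => ω.2.1 = true) *
        (pr μ (fun ω : α × Bool × Bool => ω.2.2 = true) /
          pr μ (fun ω : α × Bool × Bool => ω.2.1 = true)) :=
        mul_le_mul_of_nonneg_left hMle (le_of_lt hX1pos)
    _ = pr μ (fun ω : α × Bool × Bool => ω.2.2 = true) :=
        mul_div_cancel₀ _ (ne_of_gt hX1pos)
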